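/- Let X be a topological space. For every continuous map χ : X → V, the fibers χ⁻¹({L}) and χ⁻¹({R}) are disjoint closed subsets of X; conversely, for every pair of disjoint closed subsets s, t of X there exists a continuous map χ : X → V with χ⁻¹({L}) = s and χ⁻¹({R}) = t. -/

import Mathlib

open unitInterval

/-- The interval with doubled endpoints: `[0,1]` together with extra points
`0' = Sum.inr false` and `1' = Sum.inr true`, with `0 ⤳ 0'` and `1 ⤳ 1'`. -/
def I01 : Type := unitInterval ⊕ Bool

instance : TopologicalSpace I01 where
  IsOpen U := IsOpen (Sum.inl ⁻¹' U : Set unitInterval) ∧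
    (Sum.inr false ∈ U → Sum.inl (0 : unitInterval) ∈ U) ∧
    (Sum.inr true ∈ U → Sum.inl (1 : unitInterval) ∈ U)
  isOpen_univ := ⟨isOpen_univ, fun _ => trivial, fun _ => trivial⟩
  isOpen_inter U V hU hV := ⟨hU.1.inter hV.1,
    fun h => ⟨hU.2.1 h.1, hV.2.1 h.2⟩, fun h => ⟨hU.2.2 h.1, hV.2.2 h.2⟩⟩
  isOpen_sUnion S hS := by
    refine ⟨?_, ?_, ?_⟩
    · convert isOpen_biUnion fun U hU => (hS U hU).1 using 1
      ext x
      constructor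
      · rintro ⟨U, hU, hx⟩
        exact Set.mem_biUnion hU hx
      · intro h
        simp only [Set.mem_iUnion] at h
        obtain ⟨U, hU, hx⟩ := h
        exact ⟨U, hU, hx⟩
    · rintro ⟨U, hU, hmem⟩
      exact ⟨U, hU, (hS U hU).2.1 hmem⟩
    · rintro ⟨U, hU, hmem⟩
      exact ⟨U, hU, (hS U hU).2.2 hmem⟩

/-- The three-point space with an open point `c` and two closed points `L`, `R`. -/
inductive V : Type
  | L | c | R

instance : TopologicalSpace V where
  IsOpen U := (V.L ∈ U → V.c ∈ U) ∧ (V.R ∈ U → V.c ∈ U)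
  isOpen_univ := ⟨fun _ => trivial, fun _ => trivial⟩
  isOpen_inter U W hU hW := ⟨fun h => ⟨hU.1 h.1, hW.1 h.2⟩, fun h => ⟨hU.2 h.1, hW.2 h.2⟩⟩
  isOpen_sUnion S hS := by
    constructor
    · rintro ⟨U, hU, hmem⟩
      exact ⟨U, hU, (hS U hU).1 hmem⟩
    · rintro ⟨U, hU, hmem⟩
      exact ⟨U, hU, (hS U hU).2 hmem⟩

/-- The map `π : I₀¹ → V` collapsing `[0,1]` to the open point `c`. -/
def pi1 : I01 → V
  | Sum.inl _ => V.c
  | Sum.inr false => V.L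
  | Sum.inr true => V.R

/-- The map `ι : I₀¹ → [0,1]` collapsing the doubled endpoints. -/
def iota : I01 → unitInterval
  | Sum.inl x => x
  | Sum.inr false => 0
  | Sum.inr true => 1


/-- for every continuous `χ : X → V` the fibers of `L` and `R` are disjoint
closed sets; conversely, every pair of disjoint closed sets arises this way. -/
theorem continuous_to_V_iff_disjoint_closeds (X : Type) [TopologicalSpace X] :
    (∀ χ : X → V, Continuous χ →
      IsClosed (χ ⁻¹' {V.L}) ∧ IsClosed (χ ⁻¹' {V.R}) ∧
        Disjoint (χ ⁻¹' {V.L}) (χ ⁻¹' {V.R})) ∧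
    (∀ s t : Set X, IsClosed s → IsClosed t → Disjoint s t →
      ∃ χ : X → V, Continuous χ ∧ χ ⁻¹' {V.L} = s ∧ χ ⁻¹' {V.R} = t) := by

  constructor
  · intro χ hχ
    have hL : IsOpen ({V.c, V.R} : Set V) := ⟨fun h => by simp at h, fun _ => Or.inl rfl⟩
    have hR : IsOpen ({V.c, V.L} : Set V) := ⟨fun _ => Or.inl rfl, fun h => by
      rcases h with h | h <;> simp at h⟩
    have h1 : IsClosed (χ ⁻¹' {V.L}) := by
      have : χ ⁻¹' {V.L} = (χ ⁻¹' {V.c, V.R})ᶜ := by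
        ext x; cases h : χ x <;> simp [h]
      rw [this]; exact (hL.preimage hχ).isClosed_compl
    have h2 : IsClosed (χ ⁻¹' {V.R}) := by
      have : χ ⁻¹' {V.R} = (χ ⁻¹' {V.c, V.L})ᶜ := by
        ext x; cases h : χ x <;> simp [h]
      rw [this]; exact (hR.preimage hχ).isClosed_compl
    refine ⟨h1, h2, Set.disjoint_left.mpr ?_⟩
    intro x hx hx'
    simp only [Set.mem_preimage, Set.mem_singleton_iff] at hx hx'
    rw [hx] at hx'; exact V.noConfusion hx'
  · intro s t hs ht hst
    classical
    refine ⟨fun x => if x ∈ s then V.L else if x ∈ t then V.R else V.c, ?_, ?_, ?_⟩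
    · rw [continuous_def]
      intro U hU
      by_cases hc : V.c ∈ U
      · by_cases hLU : V.L ∈ U <;> by_cases hRU : V.R ∈ U
        · have : (fun x => if x ∈ s then V.L else if x ∈ t then V.R else V.c) ⁻¹' U =
              Set.univ := by
            ext x; simp only [Set.mem_preimage, Set.mem_univ, iff_true]
            split_ifs <;> assumption
          rw [this]; exact isOpen_univ
        · have : (fun x => if x ∈ s then V.L else if x ∈ t then V.R else V.c) ⁻¹' U = tᶜ := by
            ext x; simp only [Set.mem_preimage, Set.mem_compl_iff]
            split_ifs with h1 h2
            · exact ⟨fun _ => Set.disjoint_left.mp hst h1, fun _ => hLU⟩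
            · exact ⟨fun h => absurd h hRU, fun h => absurd h2 h⟩
            · exact ⟨fun _ => h2, fun _ => hc⟩
          rw [this]; exact ht.isOpen_compl
        · have : (fun x => if x ∈ s then V.L else if x ∈ t then V.R else V.c) ⁻¹' U = sᶜ := by
            ext x; simp only [Set.mem_preimage, Set.mem_compl_iff]
            split_ifs with h1 h2
            · exact ⟨fun h => absurd h hLU, fun h => absurd h1 h⟩
            · exact ⟨fun _ => Set.disjoint_right.mp hst h2, fun _ => hRU⟩
            · exact ⟨fun _ => h1, fun _ => hc⟩
          rw [this]; exact hs.isOpen_compl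
        · have : (fun x => if x ∈ s then V.L else if x ∈ t then V.R else V.c) ⁻¹' U =
              sᶜ ∩ tᶜ := by
            ext x; simp only [Set.mem_preimage, Set.mem_inter_iff, Set.mem_compl_iff]
            split_ifs with h1 h2
            · exact ⟨fun h => absurd h hLU, fun h => absurd h1 h.1⟩
            · exact ⟨fun h => absurd h hRU, fun h => absurd h2 h.2⟩
            · exact ⟨fun _ => ⟨h1, h2⟩, fun _ => hc⟩
          rw [this]; exact hs.isOpen_compl.inter ht.isOpen_compl
      · have hU0 : U = ∅ := by
          ext v; simp only [Set.mem_empty_iff_false, iff_false]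
          cases v with
          | L => exact fun h => hc (hU.1 h)
          | c => exact hc
          | R => exact fun h => hc (hU.2 h)
        rw [hU0, Set.preimage_empty]; exact isOpen_empty
    · ext x
      simp only [Set.mem_preimage, Set.mem_singleton_iff]
      split_ifs with h1 h2
      · simpa using h1
      · simp [h1]
      · simp [h1]
    · ext x
      simp only [Set.mem_preimage, Set.mem_singleton_iff]
      split_ifs with h1 h2
      · simp [Set.disjoint_left.mp hst h1]
      · simpa using h2
      · simp [h2]
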